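/- For every t-uniform hypergraph H and every positive integer v, the Lagrangian of the v-fold tensor power satisfies λ(H^{⊗v}) = λ(H). -/

import Mathlib

/-- A legal weighting: nonnegative weights summing to 1. -/
def IsLegalWeighting {U : Type*} [Fintype U] (x : U → ℝ) : Prop :=
  (∀ u, 0 ≤ x u) ∧ ∑ u, x u = 1

/-- The weight polynomial of a hypergraph evaluated at a weighting. -/
def weightPoly {U : Type*} [Fintype U] (H : Finset (Finset U)) (x : U → ℝ) : ℝ :=
  ∑ e ∈ H, ∏ u ∈ e, x u

/-- The Lagrangian of a hypergraph. -/
noncomputable def lagrangian {U : Type*} [Fintype U] (H : Finset (Finset U)) : ℝ :=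
  sSup {w | ∃ x, IsLegalWeighting x ∧ weightPoly H x = w}

/-- The `v`-fold tensor power of a hypergraph `H`: vertices are `v`-tuples of vertices
of `H`, and a set of tuples is an edge iff, in every coordinate `ℓ`, the tuples are
pairwise distinct and their `ℓ`-th coordinates form an edge of `H`. -/
def tensorPow {U : Type*} [Fintype U] [DecidableEq U]
    (H : Finset (Finset U)) (v : ℕ) : Finset (Finset (Fin v → U)) :=
  Finset.univ.filter fun e => ∀ ℓ : Fin v,
    (e.image fun f => f ℓ) ∈ H ∧ ∀ f ∈ e, ∀ g ∈ e, f ℓ = g ℓ → f = g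

section Aux

variable {U : Type*} [Fintype U]

lemma weightPoly_nonneg' (H : Finset (Finset U)) {x : U → ℝ} (hx : ∀ u, 0 ≤ x u) :
    0 ≤ weightPoly H x :=
  Finset.sum_nonneg fun _ _ => Finset.prod_nonneg fun u _ => hx u

lemma legal_le_one' {x : U → ℝ} (hx : IsLegalWeighting x) (u : U) : x u ≤ 1 := by
  rw [← hx.2]
  exact Finset.single_le_sum (fun u _ => hx.1 u) (Finset.mem_univ u)

lemma weightPoly_le_card' (H : Finset (Finset U)) {x : U → ℝ} (hx : IsLegalWeighting x) :
    weightPoly H x ≤ H.card := by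
  calc weightPoly H x ≤ ∑ _e ∈ H, (1 : ℝ) := Finset.sum_le_sum fun e _ =>
        Finset.prod_le_one (fun u _ => hx.1 u) (fun u _ => legal_le_one' hx u)
    _ = H.card := by simp

lemma bddAbove_lagrangianSet' (H : Finset (Finset U)) :
    BddAbove {w | ∃ x, IsLegalWeighting x ∧ weightPoly H x = w} := by
  refine ⟨H.card, ?_⟩
  rintro w ⟨x, hx, rfl⟩
  exact weightPoly_le_card' H hx

end Aux

theorem lagrangian_tensorPow {U : Type*} [Fintype U] [DecidableEq U]
    (t v : ℕ) (hv : 1 ≤ v)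
    (H : Finset (Finset U)) (hH : ∀ e ∈ H, e.card = t) :
    lagrangian (tensorPow H v) = lagrangian H := by
  classical
  set i0 : Fin v := ⟨0, hv⟩ with hi0def
  set V := Fin v → U
  set T := tensorPow H v with hT
  set SH := {w | ∃ x : U → ℝ, IsLegalWeighting x ∧ weightPoly H x = w} with hSH
  set ST := {w | ∃ y : V → ℝ, IsLegalWeighting y ∧ weightPoly T y = w} with hST
  have memT : ∀ {E : Finset V}, E ∈ T ↔ ∀ ℓ : Fin v,
      (E.image fun f => f ℓ) ∈ H ∧ ∀ f ∈ E, ∀ g ∈ E, f ℓ = g ℓ → f = g := by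
    intro E
    simp [hT, tensorPow]
    convert Iff.rfl
  by_cases hU : IsEmpty U
  · have hVempty : IsEmpty V := ⟨fun f => hU.false (f i0)⟩
    have h1 : ST = ∅ := by
      ext w
      simp only [hST, Set.mem_setOf_eq, Set.mem_empty_iff_false, iff_false]
      rintro ⟨y, hy, -⟩
      have h2 := hy.2
      rw [Finset.univ_eq_empty, Finset.sum_empty] at h2
      norm_num at h2
    have h2 : SH = ∅ := by
      ext w
      simp only [hSH, Set.mem_setOf_eq, Set.mem_empty_iff_false, iff_false]
      rintro ⟨x, hx, -⟩
      have h2 := hx.2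
      rw [Finset.univ_eq_empty, Finset.sum_empty] at h2
      norm_num at h2
    show sSup ST = sSup SH
    rw [h1, h2]
  · rw [not_isEmpty_iff] at hU
    obtain ⟨u0⟩ := hU
    -- the subset direction: every value attained on H is attained on T
    have hsub : SH ⊆ ST := by
      rintro w ⟨x, hx, rfl⟩
      set P : V → Prop := fun f => ∀ ℓ : Fin v, f ℓ = f i0 with hP
      set y : V → ℝ := fun f => if P f then x (f i0) else 0 with hy
      refine ⟨y, ⟨?_, ?_⟩, ?_⟩
      · intro f
        simp only [hy]
        split
        · exact hx.1 _
        · exact le_rfl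
      · have h1 : ∑ f : V, y f = ∑ f ∈ Finset.univ.filter P, x (f i0) := by
          rw [Finset.sum_filter]
        rw [h1, ← hx.2]
        refine Finset.sum_bij' (fun f _ => f i0) (fun u _ => (fun _ => u : V))
          ?_ ?_ ?_ ?_ ?_
        · intros; exact Finset.mem_univ _
        · intro u _
          exact Finset.mem_filter.2 ⟨Finset.mem_univ _, fun ℓ => rfl⟩
        · intro f hf
          funext ℓ
          exact ((Finset.mem_filter.1 hf).2 ℓ).symm
        · intro u _; rfl
        · intro f hf; rfl
      · show weightPoly T y = weightPoly H x
        rw [weightPoly, weightPoly]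
        have h1 : ∑ E ∈ T, ∏ f ∈ E, y f
            = ∑ E ∈ T.filter (fun E => ∀ f ∈ E, P f), ∏ f ∈ E, y f := by
          refine (Finset.sum_filter_of_ne ?_).symm
          intro E hE hne
          by_contra hc
          push_neg at hc
          obtain ⟨f, hf, hnc⟩ := hc
          exact hne (Finset.prod_eq_zero hf (by simp [hy, if_neg hnc]))
        rw [h1]
        refine Finset.sum_bij' (fun E _ => E.image fun f => f i0)
          (fun e _ => e.image fun u => (fun _ => u : V)) ?_ ?_ ?_ ?_ ?_
        · intro E hE
          exact (memT.1 (Finset.mem_filter.1 hE).1 i0).1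
        · intro e he
          refine Finset.mem_filter.2 ⟨memT.2 fun ℓ => ⟨?_, ?_⟩, ?_⟩
          · rw [Finset.image_image]
            have hc : ((fun f => f ℓ) ∘ fun u => (fun _ => u : V)) = fun u => u := rfl
            rw [hc, Finset.image_id']
            exact he
          · intro f hf g hg hfg
            simp only [Finset.mem_image] at hf hg
            obtain ⟨a, -, rfl⟩ := hf
            obtain ⟨b, -, rfl⟩ := hg
            simp only at hfg
            subst hfg
            rfl
          · intro f hf ℓ
            simp only [Finset.mem_image] at hf
            obtain ⟨a, -, rfl⟩ := hf
            rfl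
        · intro E hE
          rw [Finset.image_image]
          have : ∀ f ∈ E, (fun _ => f i0 : V) = f := fun f hf =>
            funext fun ℓ => (((Finset.mem_filter.1 hE).2) f hf ℓ).symm
          calc E.image ((fun u => (fun _ => u : V)) ∘ fun f => f i0)
              = E.image (fun f => f) := Finset.image_congr fun f hf => this f hf
            _ = E := Finset.image_id'
        · intro e he
          rw [Finset.image_image]
          have hc : ((fun f => f i0) ∘ fun u => (fun _ => u : V)) = fun u => u := rfl
          rw [hc, Finset.image_id']
        · intro E hE
          have hinj := (memT.1 (Finset.mem_filter.1 hE).1 i0).2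
          rw [Finset.prod_image (fun a ha b hb hab => hinj a ha b hb hab)]
          refine Finset.prod_congr rfl fun f hf => ?_
          simp only [hy]
          rw [if_pos ((Finset.mem_filter.1 hE).2 f hf)]
    have hSHne : SH.Nonempty := by
      refine ⟨weightPoly H (fun u => if u = u0 then 1 else 0), fun u => if u = u0 then 1 else 0,
        ⟨fun u => by dsimp only; split <;> norm_num, by simp⟩, rfl⟩
    -- the upper direction
    have hup : ∀ w ∈ ST, ∃ w' ∈ SH, w ≤ w' := by
      rintro w ⟨y, hy, rfl⟩
      set x : U → ℝ := fun u => ∑ f ∈ Finset.univ.filter (fun f : V => f i0 = u), y f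
        with hxdef
      refine ⟨weightPoly H x, ⟨x, ⟨?_, ?_⟩, rfl⟩, ?_⟩
      · intro u
        exact Finset.sum_nonneg fun f _ => hy.1 f
      · rw [← hy.2]
        simp only [hxdef]
        rw [Finset.sum_fiberwise]
      · rw [weightPoly, weightPoly]
        have hmaps : ∀ E ∈ T, (E.image fun f => f i0) ∈ H := fun E hE => (memT.1 hE i0).1
        rw [← Finset.sum_fiberwise_of_maps_to hmaps (fun E => ∏ f ∈ E, y f)]
        refine Finset.sum_le_sum fun e he => ?_
        set t' : U → Finset V := fun u => Finset.univ.filter fun f : V => f i0 = u with ht'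
        have hrhs : ∏ u ∈ e, x u = ∑ p ∈ e.pi t', ∏ a ∈ e.attach, y (p a.1 a.2) := by
          simp only [hxdef, ht']
          rw [Finset.prod_sum]
        rw [hrhs]
        set g : Finset V → U → V := fun E u =>
          if h : ∃! f, f ∈ E ∧ f i0 = u then Finset.choose _ E h else (fun _ => u) with hg
        have key : ∀ E ∈ T.filter (fun E => (E.image fun f => f i0) = e),
            ∀ u ∈ e, (∃! f, f ∈ E ∧ f i0 = u) := by
          intro E hE u hu
          obtain ⟨hET, hEe⟩ := Finset.mem_filter.1 hE
          rw [← hEe] at hu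
          obtain ⟨f, hf, hfu⟩ := Finset.mem_image.1 hu
          refine ⟨f, ⟨hf, hfu⟩, ?_⟩
          rintro f' ⟨hf', hfu'⟩
          exact (memT.1 hET i0).2 f' hf' f hf (hfu'.trans hfu.symm)
        have hgmem : ∀ E ∈ T.filter (fun E => (E.image fun f => f i0) = e),
            ∀ u ∈ e, g E u ∈ E ∧ (g E u) i0 = u := by
          intro E hE u hu
          rw [hg]
          dsimp only
          rw [dif_pos (key E hE u hu)]
          exact Finset.choose_spec (fun f => f i0 = u) E (key E hE u hu)
        have huniq : ∀ E ∈ T.filter (fun E => (E.image fun f => f i0) = e),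
            ∀ f ∈ E, f = g E (f i0) := by
          intro E hE f hf
          have hu : f i0 ∈ e := by
            rw [← (Finset.mem_filter.1 hE).2]
            exact Finset.mem_image_of_mem _ hf
          exact ((key E hE _ hu).unique ⟨hf, rfl⟩
            ⟨(hgmem E hE _ hu).1, (hgmem E hE _ hu).2⟩)
        set Ψ : Finset V → (∀ u ∈ e, V) := fun E => fun u _ => g E u with hΨ
        have hssub : ∀ E ∈ T.filter (fun E => (E.image fun f => f i0) = e),
            ∀ E' ∈ T.filter (fun E => (E.image fun f => f i0) = e),
            (∀ u ∈ e, g E u = g E' u) → E ⊆ E' := by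
          intro E hE E' hE' hgeq f hf
          have hu : f i0 ∈ e := by
            rw [← (Finset.mem_filter.1 hE).2]
            exact Finset.mem_image_of_mem _ hf
          rw [huniq E hE f hf, hgeq _ hu]
          exact (hgmem E' hE' _ hu).1
        have hinj : ∀ E ∈ T.filter (fun E => (E.image fun f => f i0) = e),
            ∀ E' ∈ T.filter (fun E => (E.image fun f => f i0) = e),
            Ψ E = Ψ E' → E = E' := by
          intro E hE E' hE' hEq
          have hgeq : ∀ u ∈ e, g E u = g E' u := fun u hu =>
            congrFun (congrFun hEq u) hu
          have hgeq' : ∀ u ∈ e, g E' u = g E u := fun u hu => (hgeq u hu).symm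
          exact le_antisymm (hssub E hE E' hE' hgeq) (hssub E' hE' E hE hgeq')
        have hprodE : ∀ E ∈ T.filter (fun E => (E.image fun f => f i0) = e),
            ∏ f ∈ E, y f = ∏ a ∈ e.attach, y (Ψ E a.1 a.2) := by
          intro E hE
          refine Finset.prod_bij'
            (fun f hf => (⟨f i0, (Finset.mem_filter.1 hE).2 ▸
              Finset.mem_image_of_mem _ hf⟩ : {a // a ∈ e}))
            (fun a _ => g E a.1) (fun f hf => Finset.mem_attach _ _)
            (fun a _ => (hgmem E hE a.1 a.2).1)
            (fun f hf => (huniq E hE f hf).symm)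
            (fun a ha => Subtype.ext ((hgmem E hE a.1 a.2).2))
            (fun f hf => congrArg y (huniq E hE f hf))
        calc ∑ E ∈ T.filter (fun E => (E.image fun f => f i0) = e), ∏ f ∈ E, y f
            = ∑ E ∈ T.filter (fun E => (E.image fun f => f i0) = e),
                ∏ a ∈ e.attach, y (Ψ E a.1 a.2) := Finset.sum_congr rfl hprodE
          _ = ∑ p ∈ (T.filter (fun E => (E.image fun f => f i0) = e)).image Ψ,
                ∏ a ∈ e.attach, y (p a.1 a.2) := by rw [Finset.sum_image hinj]
          _ ≤ ∑ p ∈ e.pi t', ∏ a ∈ e.attach, y (p a.1 a.2) := by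
              refine Finset.sum_le_sum_of_subset_of_nonneg ?_ ?_
              · intro p hp
                obtain ⟨E, hE, rfl⟩ := Finset.mem_image.1 hp
                refine Finset.mem_pi.2 fun u hu => ?_
                rw [ht']
                dsimp only
                exact Finset.mem_filter.2 ⟨Finset.mem_univ _, (hgmem E hE u hu).2⟩
              · intro p _ _
                exact Finset.prod_nonneg fun a _ => hy.1 _
    have hSTne : ST.Nonempty := hSHne.mono hsub
    show sSup ST = sSup SH
    apply le_antisymm
    · apply Real.sSup_le
      · rintro w hw
        obtain ⟨w', hw', hle⟩ := hup w hw
        exact hle.trans (le_csSup (bddAbove_lagrangianSet' H) hw')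
      · obtain ⟨w, x, hx, rfl⟩ := hSHne
        exact (weightPoly_nonneg' H hx.1).trans
          (le_csSup (bddAbove_lagrangianSet' H) ⟨x, hx, rfl⟩)
    · exact csSup_le_csSup (bddAbove_lagrangianSet' T) hSHne hsub
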